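/- Let f(t) = t log t on (0,∞) and θ(s,t) = (s-t)/(f'(s)-f'(t)) = (s-t)/(log s - log t) for s ≠ t. On the two-point space with p = q, the function K(β) = p(1 + (1/(1-β²))·(β/arctanh β)) satisfies inf{K(β) : β ∈ (-1,1)} = 2p. -/

import Mathlib

/-- The inverse hyperbolic tangent `arctanh r = ½ log((1+r)/(1-r))`. -/
noncomputable def arctanh (r : ℝ) : ℝ := (1 / 2) * Real.log ((1 + r) / (1 - r))

lemma log_le_aux : ∀ x ∈ Set.Ici (1:ℝ), Real.log x ≤ (x - 1/x) / 2 := by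
  have hmono : MonotoneOn (fun x : ℝ => (x - 1/x) / 2 - Real.log x) (Set.Ici 1) := by
    apply monotoneOn_of_deriv_nonneg (convex_Ici 1)
    · apply ContinuousOn.sub
      · apply ContinuousOn.div_const
        exact (continuousOn_id).sub (continuousOn_const.div continuousOn_id
          (fun x hx => by simp at hx; positivity))
      · exact Real.continuousOn_log.mono (fun x hx => by simp at hx ⊢; positivity)
    · intro x hx
      rw [interior_Ici] at hx
      have hx0 : x ≠ 0 := by simp at hx; positivity
      exact (((differentiable_id.differentiableAt.sub
        ((differentiableAt_const 1).div differentiableAt_id hx0)).div_const 2).sub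
        (Real.differentiableAt_log hx0)).differentiableWithinAt
    · intro x hx
      rw [interior_Ici, Set.mem_Ioi] at hx
      have hx0 : x ≠ 0 := by positivity
      have hd : HasDerivAt (fun x : ℝ => (x - 1/x) / 2 - Real.log x)
          ((1 - (-(x^2)⁻¹)) / 2 - x⁻¹) x := by
        have h1 : HasDerivAt (fun x : ℝ => x - 1/x) (1 - (-(x^2)⁻¹)) x := by
          simpa [one_div, Pi.sub_def] using (hasDerivAt_id x).sub (hasDerivAt_inv hx0)
        exact (h1.div_const 2).sub (Real.hasDerivAt_log hx0)
      rw [hd.deriv]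
      have hinv : (x^2)⁻¹ = x⁻¹ * x⁻¹ := by rw [sq, mul_inv]
      rw [hinv]
      nlinarith [sq_nonneg (1 - x⁻¹)]
  intro x hx
  have h := hmono (Set.self_mem_Ici) hx hx
  norm_num at h
  rw [one_div]
  linarith

lemma arctanh_key {b : ℝ} (hb0 : 0 < b) (hb1 : b < 1) :
    0 < arctanh b ∧ arctanh b ≤ b / (1 - b^2) := by
  have h1b : (0:ℝ) < 1 - b := by linarith
  have h1b' : (0:ℝ) < 1 + b := by linarith
  set x : ℝ := (1 + b) / (1 - b) with hxdef
  have hx1 : 1 < x := by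
    rw [hxdef, lt_div_iff₀ h1b]; linarith
  have hxpos : (0:ℝ) < x := by linarith
  constructor
  · have : 0 < Real.log x := Real.log_pos hx1
    unfold arctanh
    rw [← hxdef]
    linarith
  · have hlog := log_le_aux x (le_of_lt hx1)
    have hne : (1:ℝ) - b^2 ≠ 0 := by nlinarith
    have heq : b / (1 - b^2) = (x - 1/x) / 4 := by
      rw [hxdef]
      field_simp
      ring
    unfold arctanh
    rw [← hxdef, heq]
    linarith

lemma arctanh_neg (b : ℝ) : arctanh (-b) = - arctanh b := by
  unfold arctanh
  have : (1 + -b) / (1 - -b) = ((1 + b) / (1 - b))⁻¹ := by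
    rw [inv_div]; ring_nf
  rw [this, Real.log_inv]
  ring

/-- On the symmetric two-point space with `f(t) = t log t` and `θ` the
logarithmic mean, the function
`K(β) = p (1 + (1/(1-β²)) (β / arctanh β))` (with the convention
`β / arctanh β = 1` at `β = 0`) satisfies `inf {K(β) : β ∈ (-1,1)} = 2p`. -/
theorem two_point_convexity_constant (p : ℝ) (hp : 0 < p) :
    sInf {k : ℝ | ∃ β ∈ Set.Ioo (-1:ℝ) 1,
        k = p * (1 + (1 / (1 - β ^ 2)) *
          (if β = 0 then 1 else β / arctanh β))} = 2 * p := by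
  apply IsLeast.csInf_eq
  constructor
  · exact ⟨0, by constructor <;> norm_num, by norm_num; ring⟩
  · rintro k ⟨β, ⟨hβl, hβu⟩, rfl⟩
    by_cases hβ0 : β = 0
    · subst hβ0; norm_num; linarith
    · rw [if_neg hβ0]
      -- reduce to |β|
      have hb0 : 0 < |β| := abs_pos.mpr hβ0
      have hb1 : |β| < 1 := abs_lt.mpr ⟨hβl, hβu⟩
      obtain ⟨hpos, hle⟩ := arctanh_key hb0 hb1
      have hratio : β / arctanh β = |β| / arctanh |β| := by
        rcases abs_cases β with ⟨h, _⟩ | ⟨h, _⟩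
        · rw [h]
        · have h2 := arctanh_neg (-β)
          rw [neg_neg] at h2
          rw [h, h2, div_neg, neg_div]
      have hsq : β ^ 2 = |β| ^ 2 := (sq_abs β).symm
      rw [hratio, hsq]
      set b := |β|
      have h1b2 : (0:ℝ) < 1 - b ^ 2 := by nlinarith
      have hkey : (1:ℝ) ≤ (1 / (1 - b ^ 2)) * (b / arctanh b) := by
        rw [div_mul_div_comm, one_mul, le_div_iff₀ (by positivity), one_mul]
        calc (1 - b ^ 2) * arctanh b ≤ (1 - b ^ 2) * (b / (1 - b ^ 2)) :=
              mul_le_mul_of_nonneg_left hle h1b2.le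
          _ = b := by field_simp
      nlinarith
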